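/- For all n ≥ 1, all x_{1:n} ∈ {0,1}^n, and all θ ∈ [0,1], the parameter redundancy of the KT estimator is uniformly bounded: log₂(θ^b (1−θ)^a) − log₂ KT(x_{1:n}) ≤ (1/2)·log₂ n + 1, where a and b are the numbers of zeros and ones in x_{1:n} (with the convention that the left-hand side is −∞ when θ^b(1−θ)^a = 0). -/

import Mathlib

/-- The Krichevsky–Trofimov estimator: for a binary string with `b` ones and `a`
zeros, `KT(x_{1:n}) = ∫₀¹ θ^b (1-θ)^a · π⁻¹ θ^{-1/2} (1-θ)^{-1/2} dθ`. -/
noncomputable def KT (l : List Bool) : ℝ :=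
  ∫ θ in (0 : ℝ)..1,
    θ ^ l.count true * (1 - θ) ^ l.count false *
      (Real.pi⁻¹ * θ ^ (-(1 / 2) : ℝ) * (1 - θ) ^ (-(1 / 2) : ℝ))


open Real Set

lemma aux_hasDeriv {u : ℝ} (hu : 0 < u) :
    HasDerivAt (fun u : ℝ => Real.log (1+u) - 2*u/(2+u)) (1/(1+u) - 4/(2+u)^2) u := by
  have h1 : HasDerivAt (fun u : ℝ => 1 + u) 1 u := (hasDerivAt_id u).const_add 1
  have h2 : HasDerivAt (fun u : ℝ => Real.log (1+u)) (1/(1+u)) u := by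
    have := (Real.hasDerivAt_log (by linarith : (1:ℝ)+u ≠ 0)).comp u h1
    simpa [one_div, Function.comp_def] using this
  have h3 : HasDerivAt (fun u : ℝ => 2*u) 2 u := by simpa using (hasDerivAt_id u).const_mul 2
  have h4 : HasDerivAt (fun u : ℝ => 2+u) 1 u := (hasDerivAt_id u).const_add 2
  have h5 : HasDerivAt (fun u : ℝ => 2*u/(2+u)) ((2*(2+u) - 2*u*1)/(2+u)^2) u :=
    h3.div h4 (by linarith)
  refine (h2.sub h5).congr_deriv ?_
  ring

lemma log_lb {u : ℝ} (hu : 0 ≤ u) : 2*u/(2+u) ≤ Real.log (1+u) := by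
  set f : ℝ → ℝ := fun u => Real.log (1+u) - 2*u/(2+u) with hf
  have mono : MonotoneOn f (Set.Ici 0) := by
    apply monotoneOn_of_deriv_nonneg (convex_Ici 0)
    · apply ContinuousOn.sub
      · exact Real.continuousOn_log.comp (by fun_prop)
          (fun x hx => by simp at hx ⊢; intro h; linarith)
      · apply ContinuousOn.div (by fun_prop) (by fun_prop)
        intro x hx; simp at hx; intro h; linarith
    · intro x hx
      rw [interior_Ici] at hx
      exact (aux_hasDeriv hx).differentiableAt.differentiableWithinAt
    · intro x hx
      rw [interior_Ici] at hx
      have hx' : (0:ℝ) < x := hx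
      rw [(aux_hasDeriv hx).deriv]
      rw [sub_nonneg, div_le_div_iff₀ (by positivity) (by positivity)]
      nlinarith
  have := mono (self_mem_Ici) (mem_Ici.mpr hu) hu
  simp [hf] at this
  linarith

noncomputable def psi (x : ℝ) : ℝ := (x+1) * Real.log (x+1) - x * Real.log x - Real.log (x+1/2)

lemma psi_hasDeriv {x : ℝ} (hx : 0 < x) :
    HasDerivAt psi (Real.log (x+1) - Real.log x - 1/(x+1/2)) x := by
  have h1 : HasDerivAt (fun x : ℝ => x + 1) 1 x := (hasDerivAt_id x).add_const 1
  have h2 : HasDerivAt (fun x : ℝ => x + 1/2) 1 x := (hasDerivAt_id x).add_const (1/2)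
  have hl1 : HasDerivAt (fun x : ℝ => Real.log (x+1)) (1/(x+1)) x := by
    simpa [one_div, Function.comp_def] using (Real.hasDerivAt_log (by linarith : x+1 ≠ 0)).comp x h1
  have hl2 : HasDerivAt (fun x : ℝ => Real.log (x+1/2)) (1/(x+1/2)) x := by
    simpa [one_div, Function.comp_def] using (Real.hasDerivAt_log (by linarith : x+1/2 ≠ 0)).comp x h2
  have hm1 : HasDerivAt (fun x : ℝ => (x+1) * Real.log (x+1))
      (1 * Real.log (x+1) + (x+1) * (1/(x+1))) x := h1.mul hl1
  have hm2 : HasDerivAt (fun x : ℝ => x * Real.log x)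
      (1 * Real.log x + x * (1/x)) x := by
    simpa [one_div, Pi.mul_def] using (hasDerivAt_id x).mul (Real.hasDerivAt_log hx.ne')
  have := (hm1.sub hm2).sub hl2
  refine this.congr_deriv ?_
  rw [mul_one_div_cancel (by linarith), mul_one_div_cancel hx.ne']
  ring

lemma psi_mono : MonotoneOn psi (Set.Ici 1) := by
  apply monotoneOn_of_deriv_nonneg (convex_Ici 1)
  · apply ContinuousOn.sub
    apply ContinuousOn.sub
    · exact ContinuousOn.mul (by fun_prop) (Real.continuousOn_log.comp (by fun_prop)
        (fun x hx => by simp at hx ⊢; intro h; linarith))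
    · exact ContinuousOn.mul (by fun_prop) (Real.continuousOn_log.comp (by fun_prop)
        (fun x hx => by simp at hx ⊢; intro h; linarith))
    · exact Real.continuousOn_log.comp (by fun_prop)
        (fun x hx => by simp at hx ⊢; intro h; linarith)
  · intro x hx
    rw [interior_Ici] at hx
    have hx' : (0:ℝ) < x := by have : (1:ℝ) < x := hx; linarith
    exact (psi_hasDeriv hx').differentiableAt.differentiableWithinAt
  · intro x hx
    rw [interior_Ici] at hx
    have hx' : (0:ℝ) < x := by have : (1:ℝ) < x := hx; linarith
    rw [(psi_hasDeriv hx').deriv]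
    have h1 : Real.log (x+1) - Real.log x = Real.log (1 + 1/x) := by
      rw [← Real.log_div (by linarith) hx'.ne']
      congr 1
      field_simp
    have h2 := log_lb (le_of_lt (by positivity : (0:ℝ) < 1/x))
    have h3 : 2*(1/x)/(2+1/x) = 1/(x+1/2) := by
      rw [div_eq_div_iff (by positivity) (by positivity)]
      field_simp
    rw [h1]
    rw [h3] at h2
    linarith

lemma step_log {x y : ℝ} (hx : 1 ≤ x) (hxy : x ≤ y) :
    (x+1) * Real.log (x+1) - x * Real.log x - Real.log (x+1/2)
      ≤ (y+1/2) * (Real.log (y+1) - Real.log y) := by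
  have hy : (1:ℝ) ≤ y := hx.trans hxy
  have h1 : psi x ≤ psi y := psi_mono (Set.mem_Ici.mpr hx) (Set.mem_Ici.mpr hy) hxy
  have h2 : psi y ≤ (y+1/2) * (Real.log (y+1) - Real.log y) := by
    unfold psi
    have : Real.log y + Real.log (y+1) ≤ 2 * Real.log (y+1/2) := by
      rw [← Real.log_mul (by linarith) (by linarith), two_mul, ← Real.log_mul (by linarith) (by linarith)]
      apply Real.log_le_log (by nlinarith)
      nlinarith
    nlinarith [this]
  calc psi x ≤ psi y := h1
    _ ≤ _ := h2

lemma step_mul {b n : ℕ} (hbn : b ≤ n) (hn : 1 ≤ n) :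
    ((b:ℝ)+1)^(b+1) * (n:ℝ)^n * Real.sqrt n
      ≤ (b:ℝ)^b * ((n:ℝ)+1)^n * Real.sqrt ((n:ℝ)+1) * ((b:ℝ)+1/2) := by
  have hn1 : (1:ℝ) ≤ (n:ℝ) := by exact_mod_cast hn
  rcases Nat.eq_zero_or_pos b with hb | hb
  · subst hb
    push_cast
    simp only [pow_zero, one_mul, zero_add, pow_one]
    -- goal : 1 * n^n * √n ≤ (n+1)^n * √(n+1) * (1/2)  (roughly)
    have key : 2 * (n:ℝ)^n ≤ ((n:ℝ)+1)^n := by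
      have := one_add_mul_le_pow (a := 1/(n:ℝ))
        (le_trans (by norm_num : (-2:ℝ) ≤ 0) (by positivity)) n
      have h2 : (2:ℝ) ≤ (1+1/(n:ℝ))^n := by
        refine le_trans ?_ this
        rw [mul_one_div, div_self (by linarith : (n:ℝ) ≠ 0)]
        norm_num
      calc 2 * (n:ℝ)^n ≤ (1+1/(n:ℝ))^n * (n:ℝ)^n := by nlinarith [pow_pos (by linarith : (0:ℝ) < n) n]
        _ = _ := by rw [← mul_pow]; congr 1; field_simp
    apply le_of_pow_le_pow_left₀ (two_ne_zero) (by positivity)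
    have hsq1 : Real.sqrt (n:ℝ) ^ 2 = (n:ℝ) := Real.sq_sqrt (by linarith)
    have hsq2 : Real.sqrt ((n:ℝ)+1) ^ 2 = (n:ℝ)+1 := Real.sq_sqrt (by linarith)
    have expand1 : ((n:ℝ)^n * Real.sqrt n)^2 = ((n:ℝ)^n)^2 * (n:ℝ) := by
      rw [mul_pow, hsq1]
    have expand2 : (((n:ℝ)+1)^n * Real.sqrt ((n:ℝ)+1) * ((1:ℝ)/2))^2
        = (((n:ℝ)+1)^n)^2 * ((n:ℝ)+1) / 4 := by
      rw [mul_pow, mul_pow, hsq2]; ring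
    rw [expand1, expand2]
    have hkey2 : (2*(n:ℝ)^n)^2 ≤ (((n:ℝ)+1)^n)^2 :=
      pow_le_pow_left₀ (by positivity) key 2
    nlinarith [pow_pos (by linarith : (0:ℝ) < (n:ℝ)) n, hkey2, sq_nonneg ((n:ℝ)^n)]
  · have hb1 : (1:ℝ) ≤ (b:ℝ) := by exact_mod_cast hb
    have hbn' : (b:ℝ) ≤ (n:ℝ) := by exact_mod_cast hbn
    have hL : (0:ℝ) < ((b:ℝ)+1)^(b+1) * (n:ℝ)^n * Real.sqrt n := by positivity
    have hR : (0:ℝ) < (b:ℝ)^b * ((n:ℝ)+1)^n * Real.sqrt ((n:ℝ)+1) * ((b:ℝ)+1/2) := by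
      positivity
    rw [← Real.log_le_log_iff hL hR]
    rw [Real.log_mul (by positivity) (by positivity), Real.log_mul (by positivity) (by positivity),
        Real.log_mul (by positivity) (by positivity), Real.log_mul (by positivity) (by positivity),
        Real.log_mul (by positivity) (by positivity)]
    simp only [Real.log_pow]
    rw [Real.log_sqrt (by linarith), Real.log_sqrt (by linarith)]
    have key := step_log hb1 hbn'
    push_cast
    ring_nf at key ⊢
    linarith [key]

noncomputable def Gf (a b : ℕ) : ℝ :=
  Real.Gamma ((b:ℝ)+1/2) * Real.Gamma ((a:ℝ)+1/2) / (Real.pi * Real.Gamma ((a:ℝ)+b+1))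

lemma Gf_pos (a b : ℕ) : 0 < Gf a b := by
  unfold Gf
  have h1 := Real.Gamma_pos_of_pos (by positivity : (0:ℝ) < (b:ℝ)+1/2)
  have h2 := Real.Gamma_pos_of_pos (by positivity : (0:ℝ) < (a:ℝ)+1/2)
  have h3 := Real.Gamma_pos_of_pos (by positivity : (0:ℝ) < (a:ℝ)+b+1)
  positivity

lemma Gf_zero_zero : Gf 0 0 = 1 := by
  unfold Gf
  norm_num [Real.Gamma_one_half_eq, Real.Gamma_one]
  rw [Real.mul_self_sqrt Real.pi_pos.le]
  exact div_self Real.pi_pos.ne'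

lemma Gf_symm (a b : ℕ) : Gf a b = Gf b a := by
  unfold Gf
  rw [mul_comm (Real.Gamma _)]
  ring_nf

lemma Gf_succ (a b : ℕ) : Gf a (b+1) = Gf a b * (((b:ℝ)+1/2) / ((a:ℝ)+b+1)) := by
  unfold Gf
  have h1 : ((b+1:ℕ):ℝ)+1/2 = ((b:ℝ)+1/2)+1 := by push_cast; ring
  have h2 : ((a:ℝ)+(b+1:ℕ)+1) = ((a:ℝ)+b+1)+1 := by push_cast; ring
  rw [h1, h2, Real.Gamma_add_one (by positivity), Real.Gamma_add_one (by positivity)]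
  have h3 := Real.Gamma_pos_of_pos (by positivity : (0:ℝ) < (a:ℝ)+b+1)
  field_simp

lemma beta_real (a b : ℕ) :
    ∫ θ in (0:ℝ)..1, θ^((b:ℝ)-1/2) * (1-θ)^((a:ℝ)-1/2)
      = Real.Gamma ((b:ℝ)+1/2) * Real.Gamma ((a:ℝ)+1/2) / Real.Gamma ((a:ℝ)+b+1) := by
  set I : ℝ := ∫ θ in (0:ℝ)..1, θ^((b:ℝ)-1/2) * (1-θ)^((a:ℝ)-1/2) with hI
  have hcoe : (I:ℂ) = Complex.betaIntegral (((b:ℝ)+1/2 : ℝ) : ℂ) (((a:ℝ)+1/2 : ℝ) : ℂ) := by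
    rw [hI, Complex.betaIntegral, ← intervalIntegral.integral_ofReal]
    apply intervalIntegral.integral_congr
    intro x hx
    rw [Set.uIcc_of_le (by norm_num : (0:ℝ) ≤ 1)] at hx
    obtain ⟨h0, h1⟩ := hx
    have eb : ((((b:ℝ)-1/2 : ℝ)) : ℂ) = (((b:ℝ)+1/2 : ℝ) : ℂ) - 1 := by push_cast; ring
    have ea : ((((a:ℝ)-1/2 : ℝ)) : ℂ) = (((a:ℝ)+1/2 : ℝ) : ℂ) - 1 := by push_cast; ring
    simp only [Complex.ofReal_mul, Complex.ofReal_cpow h0,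
      Complex.ofReal_cpow (by linarith : (0:ℝ) ≤ 1-x), eb, ea, Complex.ofReal_sub,
      Complex.ofReal_one]
  have hbeta := Complex.Gamma_mul_Gamma_eq_betaIntegral
    (s := ((b:ℝ)+1/2 : ℝ)) (t := ((a:ℝ)+1/2 : ℝ))
    (by simp; positivity) (by simp; positivity)
  rw [← hcoe] at hbeta
  have hsum : (((b:ℝ)+1/2 : ℝ) : ℂ) + (((a:ℝ)+1/2 : ℝ) : ℂ) = (((a:ℝ)+(b:ℝ)+1 : ℝ) : ℂ) := by
    push_cast; ring
  rw [hsum] at hbeta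
  rw [Complex.Gamma_ofReal, Complex.Gamma_ofReal, Complex.Gamma_ofReal] at hbeta
  have hG3 := Real.Gamma_pos_of_pos (by positivity : (0:ℝ) < (a:ℝ)+b+1)
  rw [eq_div_iff hG3.ne']
  have : ((Real.Gamma ((b:ℝ)+1/2) * Real.Gamma ((a:ℝ)+1/2) : ℝ) : ℂ)
      = ((Real.Gamma ((a:ℝ)+b+1) * I : ℝ) : ℂ) := by push_cast; rw [hbeta]
  have := Complex.ofReal_inj.mp this
  linarith [this]

lemma cast_half_ne (b : ℕ) : ((b:ℝ)-1/2) ≠ 0 := by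
  rcases Nat.eq_zero_or_pos b with rfl | hb
  · norm_num
  · have : (1:ℝ) ≤ (b:ℝ) := by exact_mod_cast hb
    intro h; linarith

lemma KT_eq (l : List Bool) : KT l = Gf (l.count false) (l.count true) := by
  set a := l.count false
  set b := l.count true
  have hcong : ∀ x ∈ Set.uIcc (0:ℝ) 1,
      x ^ b * (1 - x) ^ a * (Real.pi⁻¹ * x ^ (-(1 / 2) : ℝ) * (1 - x) ^ (-(1 / 2) : ℝ))
        = Real.pi⁻¹ * (x^((b:ℝ)-1/2) * (1-x)^((a:ℝ)-1/2)) := by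
    intro x hx
    rw [Set.uIcc_of_le (by norm_num : (0:ℝ) ≤ 1)] at hx
    obtain ⟨h0, h1⟩ := hx
    rcases eq_or_lt_of_le h0 with rfl | h0'
    · rw [Real.zero_rpow (by norm_num : -(1/2:ℝ) ≠ 0), Real.zero_rpow (cast_half_ne b)]
      simp
    rcases eq_or_lt_of_le h1 with rfl | h1'
    · rw [sub_self, Real.zero_rpow (by norm_num : -(1/2:ℝ) ≠ 0), Real.zero_rpow (cast_half_ne a)]
      simp
    · have h2 : (0:ℝ) < 1 - x := by linarith
      have e1 : (b:ℝ)-1/2 = (b:ℝ) + (-(1/2)) := by ring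
      have e2 : (a:ℝ)-1/2 = (a:ℝ) + (-(1/2)) := by ring
      rw [e1, e2, Real.rpow_add h0', Real.rpow_add h2,
        Real.rpow_natCast x b, Real.rpow_natCast (1-x) a]
      ring
  unfold KT
  rw [intervalIntegral.integral_congr hcong, intervalIntegral.integral_const_mul,
    beta_real a b, Gf]
  field_simp

lemma amgm (a b : ℕ) {θ : ℝ} (h0 : 0 ≤ θ) (h1 : θ ≤ 1) :
    θ^b * (1-θ)^a * ((a:ℝ)+b)^(a+b) ≤ (a:ℝ)^a * (b:ℝ)^b := by
  rcases Nat.eq_zero_or_pos (a+b) with hn | hn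
  · obtain ⟨ha, hb⟩ := Nat.add_eq_zero.mp hn
    subst ha; subst hb; norm_num
  have hnR : (0:ℝ) < (a:ℝ)+b := by
    have : (1:ℝ) ≤ ((a+b:ℕ):ℝ) := by exact_mod_cast hn
    push_cast at this; linarith
  set n : ℝ := (a:ℝ)+b with hn'
  have key := Real.geom_mean_le_arith_mean2_weighted
    (w₁ := (b:ℝ)/n) (w₂ := (a:ℝ)/n) (p₁ := θ*n/b) (p₂ := (1-θ)*n/a)
    (by positivity) (by positivity)
    (div_nonneg (mul_nonneg h0 hnR.le) (Nat.cast_nonneg b))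
    (div_nonneg (mul_nonneg (by linarith) hnR.le) (Nat.cast_nonneg a))
    (by field_simp; rw [hn']; ring)
  have hsum : ((b:ℝ)/n) * (θ*n/b) + ((a:ℝ)/n) * ((1-θ)*n/a) ≤ 1 := by
    have e1 : ((b:ℝ)/n) * (θ*n/b) ≤ θ := by
      rcases Nat.eq_zero_or_pos b with rfl | hb
      · simp; exact h0
      · have hbR : (0:ℝ) < b := by exact_mod_cast hb
        rw [div_mul_div_comm]
        rw [div_le_iff₀ (by positivity)]
        ring_nf
        nlinarith
    have e2 : ((a:ℝ)/n) * ((1-θ)*n/a) ≤ 1-θ := by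
      rcases Nat.eq_zero_or_pos a with rfl | ha
      · simp; linarith
      · have haR : (0:ℝ) < a := by exact_mod_cast ha
        rw [div_mul_div_comm]
        rw [div_le_iff₀ (by positivity)]
        ring_nf
        nlinarith
    linarith
  have hX : (θ*n/b)^((b:ℝ)/n) * ((1-θ)*n/a)^((a:ℝ)/n) ≤ 1 := le_trans key hsum
  have hXnn : (0:ℝ) ≤ (θ*n/b)^((b:ℝ)/n) * ((1-θ)*n/a)^((a:ℝ)/n) := by
    have : (0:ℝ) ≤ 1-θ := by linarith
    positivity
  have hpow : ((θ*n/b)^((b:ℝ)/n) * ((1-θ)*n/a)^((a:ℝ)/n))^(a+b) ≤ 1 := by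
    calc _ ≤ (1:ℝ)^(a+b) := pow_le_pow_left₀ hXnn hX _
      _ = 1 := one_pow _
  have hexp : ∀ (p : ℝ) (k : ℕ), 0 ≤ p → (p^((k:ℝ)/n))^(a+b) = p^k := by
    intro p k hp
    rw [← Real.rpow_natCast (p^((k:ℝ)/n)) (a+b), ← Real.rpow_mul hp, ← Real.rpow_natCast p k]
    congr 1
    rw [hn']
    have : (a:ℝ) + (b:ℝ) ≠ 0 := by rw [← hn']; exact hnR.ne'
    push_cast
    field_simp
  have h1θ : (0:ℝ) ≤ 1 - θ := by linarith
  rw [mul_pow, hexp _ b (div_nonneg (mul_nonneg h0 hnR.le) (Nat.cast_nonneg b)),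
    hexp _ a (div_nonneg (mul_nonneg h1θ hnR.le) (Nat.cast_nonneg a))] at hpow
  have eb : (θ*n/(b:ℝ))^b * (b:ℝ)^b = θ^b * n^b := by
    rcases Nat.eq_zero_or_pos b with rfl | hb
    · simp
    · have hbR : (0:ℝ) < b := by exact_mod_cast hb
      rw [← mul_pow, div_mul_cancel₀ _ hbR.ne', mul_pow]
  have ea : ((1-θ)*n/(a:ℝ))^a * (a:ℝ)^a = (1-θ)^a * n^a := by
    rcases Nat.eq_zero_or_pos a with rfl | ha
    · simp
    · have haR : (0:ℝ) < a := by exact_mod_cast ha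
      rw [← mul_pow, div_mul_cancel₀ _ haR.ne', mul_pow]
  calc θ^b * (1-θ)^a * n^(a+b)
      = ((θ*n/(b:ℝ))^b * ((1-θ)*n/(a:ℝ))^a) * ((a:ℝ)^a * (b:ℝ)^b) := by
        rw [pow_add]
        calc θ ^ b * (1 - θ) ^ a * (n ^ a * n ^ b)
            = ((1-θ)^a * n^a) * (θ^b * n^b) := by ring
          _ = (((1-θ)*n/(a:ℝ))^a * (a:ℝ)^a) * ((θ*n/(b:ℝ))^b * (b:ℝ)^b) := by rw [eb, ea]
          _ = _ := by ring
    _ ≤ 1 * ((a:ℝ)^a * (b:ℝ)^b) := by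
        apply mul_le_mul_of_nonneg_right hpow (by positivity)
    _ = (a:ℝ)^a * (b:ℝ)^b := one_mul _

lemma step {a b n : ℕ} (h : a + b = n) (hn : 1 ≤ n)
    (IH : (a:ℝ)^a * (b:ℝ)^b ≤ 2 * Real.sqrt n * Gf a b * (n:ℝ)^n) :
    (a:ℝ)^a * ((b:ℝ)+1)^(b+1)
      ≤ 2 * Real.sqrt ((n:ℝ)+1) * Gf a (b+1) * ((n:ℝ)+1)^(n+1) := by
  have hn1 : (1:ℝ) ≤ (n:ℝ) := by exact_mod_cast hn
  have hbn : b ≤ n := by omega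
  have hsm := step_mul hbn hn
  have hGf : Gf a (b+1) = Gf a b * (((b:ℝ)+1/2) / ((n:ℝ)+1)) := by
    rw [Gf_succ]
    congr 2
    push_cast [← h]
    ring
  have hc : (0:ℝ) < (n:ℝ)^n * Real.sqrt n := by positivity
  rw [← mul_le_mul_iff_of_pos_right hc]
  have haa : (0:ℝ) ≤ (a:ℝ)^a := by positivity
  calc (a:ℝ)^a * ((b:ℝ)+1)^(b+1) * ((n:ℝ)^n * Real.sqrt n)
      = (a:ℝ)^a * (((b:ℝ)+1)^(b+1) * (n:ℝ)^n * Real.sqrt n) := by ring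
    _ ≤ (a:ℝ)^a * ((b:ℝ)^b * ((n:ℝ)+1)^n * Real.sqrt ((n:ℝ)+1) * ((b:ℝ)+1/2)) :=
        mul_le_mul_of_nonneg_left hsm haa
    _ = ((a:ℝ)^a * (b:ℝ)^b) * (((n:ℝ)+1)^n * Real.sqrt ((n:ℝ)+1) * ((b:ℝ)+1/2)) := by ring
    _ ≤ (2 * Real.sqrt n * Gf a b * (n:ℝ)^n)
          * (((n:ℝ)+1)^n * Real.sqrt ((n:ℝ)+1) * ((b:ℝ)+1/2)) := by
        apply mul_le_mul_of_nonneg_right IH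
        have h1 : (0:ℝ) ≤ ((n:ℝ)+1)^n := by positivity
        have h2 : (0:ℝ) ≤ Real.sqrt ((n:ℝ)+1) := Real.sqrt_nonneg _
        positivity
    _ = 2 * Real.sqrt ((n:ℝ)+1) * (Gf a b * (((b:ℝ)+1/2) / ((n:ℝ)+1))) * ((n:ℝ)+1)^(n+1)
          * ((n:ℝ)^n * Real.sqrt n) := by
        rw [pow_succ]
        field_simp
    _ = 2 * Real.sqrt ((n:ℝ)+1) * Gf a (b+1) * ((n:ℝ)+1)^(n+1) * ((n:ℝ)^n * Real.sqrt n) := by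
        rw [hGf]

lemma main : ∀ n : ℕ, 1 ≤ n → ∀ a b : ℕ, a + b = n →
    (a:ℝ)^a * (b:ℝ)^b ≤ 2 * Real.sqrt n * Gf a b * (n:ℝ)^n := by
  intro n
  induction n with
  | zero => omega
  | succ m IH =>
    intro _ a b hab
    rcases Nat.eq_zero_or_pos m with rfl | hm
    · -- base case n = 1
      have hGf01 : Gf 0 1 = 1/2 := by
        rw [Gf_succ 0 0, Gf_zero_zero]
        norm_num
      have hab' : (a = 0 ∧ b = 1) ∨ (a = 1 ∧ b = 0) := by omega
      rcases hab' with ⟨rfl, rfl⟩ | ⟨rfl, rfl⟩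
      · norm_num [Real.sqrt_one, hGf01]
      · rw [Gf_symm 1 0]
        norm_num [Real.sqrt_one, hGf01]
    · -- inductive step
      rcases Nat.eq_zero_or_pos b with rfl | hb
      · -- b = 0, so a = m+1, add a zero; use symmetry
        have ha : a = m + 1 := by omega
        subst ha
        have IH' := IH hm 0 m (by omega)
        have hstep := step (a := 0) (b := m) (n := m) (by omega) hm IH'
        rw [Gf_symm]
        push_cast at hstep ⊢
        norm_num at hstep ⊢
        linarith [hstep]
      · -- b ≥ 1
        obtain ⟨b', rfl⟩ : ∃ b', b = b' + 1 := ⟨b - 1, by omega⟩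
        have IH' := IH (by omega) a b' (by omega)
        have := step (by omega : a + b' = m) (by omega) IH'
        push_cast at this ⊢
        exact this

lemma count_add_count (l : List Bool) : l.count true + l.count false = l.length := by
  induction l with
  | nil => simp
  | cons x t ih =>
    cases x <;> simp [List.count_cons] <;> omega

/-- For all `n ≥ 1`, all `x_{1:n} ∈ {0,1}ⁿ` and all `θ ∈ [0,1]`,
the parameter redundancy of the KT estimator is uniformly bounded:
`log₂(θ^b (1-θ)^a) - log₂ KT(x_{1:n}) ≤ ½ log₂ n + 1`, where `a` and `b` are the
numbers of zeros and ones in `x_{1:n}`.  (The convention that the left-hand side is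
`-∞` when `θ^b (1-θ)^a = 0` is encoded by assuming `0 < θ^b (1-θ)^a`, the
inequality being trivial otherwise.) -/
theorem kt_parameter_redundancy (l : List Bool) (hl : l ≠ [])
    (θ : ℝ) (hθ : θ ∈ Set.Icc (0 : ℝ) 1)
    (hpos : 0 < θ ^ l.count true * (1 - θ) ^ l.count false) :
    Real.logb 2 (θ ^ l.count true * (1 - θ) ^ l.count false) - Real.logb 2 (KT l)
      ≤ 1 / 2 * Real.logb 2 l.length + 1 := by
  obtain ⟨h0, h1⟩ := hθ
  set a := l.count false with ha
  set b := l.count true with hb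
  set n := l.length with hn
  have hab : b + a = n := count_add_count l
  have hn1 : 1 ≤ n := by
    rw [hn]
    exact List.length_pos_iff.mpr hl
  have hnR : (1:ℝ) ≤ (n:ℝ) := by exact_mod_cast hn1
  have hKT : KT l = Gf a b := KT_eq l
  have hGpos := Gf_pos a b
  have hKTpos : 0 < KT l := by rw [hKT]; exact hGpos
  -- chain of inequalities
  have hcast : ((a:ℝ)+b) = (n:ℝ) := by exact_mod_cast by omega
  have h2 : θ^b * (1-θ)^a * ((n:ℝ))^(n) ≤ (a:ℝ)^a * (b:ℝ)^b := by
    have := amgm a b h0 h1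
    rwa [hcast, (by omega : a + b = n)] at this
  have h3 := main n hn1 a b (by omega)
  have h4 : θ^b * (1-θ)^a * (n:ℝ)^n ≤ 2 * Real.sqrt n * Gf a b * (n:ℝ)^n :=
    le_trans h2 h3
  have hnpow : (0:ℝ) < (n:ℝ)^n := by positivity
  have h5 : θ^b * (1-θ)^a ≤ 2 * Real.sqrt n * Gf a b :=
    le_of_mul_le_mul_right h4 hnpow
  have hsq : (0:ℝ) < Real.sqrt n := Real.sqrt_pos.mpr (by linarith)
  have h6 : Real.logb 2 (θ^b * (1-θ)^a) ≤ Real.logb 2 (2 * Real.sqrt n * Gf a b) :=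
    Real.logb_le_logb_of_le (by norm_num) hpos h5
  have h7 : Real.logb 2 (2 * Real.sqrt n * Gf a b)
      = 1 + (1/2) * Real.logb 2 n + Real.logb 2 (Gf a b) := by
    rw [Real.logb_mul (by positivity) hGpos.ne', Real.logb_mul (by norm_num) hsq.ne',
      Real.logb_self_eq_one (by norm_num)]
    congr 1
    unfold Real.logb
    rw [Real.log_sqrt (by linarith)]
    ring
  rw [hKT]
  have := h6.trans_eq h7
  linarith
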